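/- Let A be a co-hereditary graph property and G a graph of order n such that for k = ⌈n/2⌉ one has c_k / C(n,k) ≥ (n−k)/(k+1). Then the sequence c_0, c_1, ..., c_n is unimodal with mode ⌈n/2⌉, i.e., c_i ≤ c_{i+1} for i < ⌈n/2⌉ and c_i ≥ c_{i+1} for i ≥ ⌈n/2⌉. -/

import Mathlib

open Finset in
lemma key_keylemma {V : Type} [Fintype V] [DecidableEq V] (P : Finset V → Prop) [DecidablePred P]
    (hP : ∀ ⦃S T : Finset V⦄, S ⊆ T → P S → P T) (i : ℕ) :
    (Fintype.card V - i) * (Finset.univ.filter fun S : Finset V => S.card = i ∧ P S).card ≤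
    (i + 1) * (Finset.univ.filter fun S : Finset V => S.card = i + 1 ∧ P S).card := by
  classical
  set s := Finset.univ.filter fun S : Finset V => S.card = i ∧ P S with hs
  set t := Finset.univ.filter fun S : Finset V => S.card = i + 1 ∧ P S with ht
  have h := Finset.card_mul_le_card_mul (fun S T : Finset V => S ⊆ T)
    (s := s) (t := t) (m := Fintype.card V - i) (n := i + 1)
    (fun S hS => by
      simp only [hs, Finset.mem_filter] at hS
      have hle : Sᶜ.card ≤ (t.bipartiteAbove (fun S T : Finset V => S ⊆ T) S).card := by
        apply Finset.card_le_card_of_injOn (fun v => insert v S)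
        · intro v hv
          rw [Finset.mem_coe, Finset.mem_compl] at hv
          rw [Finset.mem_coe, Finset.mem_bipartiteAbove]
          refine ⟨?_, Finset.subset_insert _ _⟩
          simp only [ht, Finset.mem_filter]
          exact ⟨Finset.mem_univ _, by rw [Finset.card_insert_of_notMem hv, hS.2.1],
            hP (Finset.subset_insert _ _) hS.2.2⟩
        · intro v hv w hw hvw
          rw [Finset.coe_compl, Set.mem_compl_iff, Finset.mem_coe] at hv
          have hvw' : insert v S = insert w S := hvw
          have : v ∈ insert w S := by rw [← hvw']; exact Finset.mem_insert_self _ _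
          rcases Finset.mem_insert.1 this with h | h
          · exact h
          · exact absurd h hv
      calc Fintype.card V - i = Sᶜ.card := by rw [Finset.card_compl, hS.2.1]
        _ ≤ _ := hle)
    (fun T hT => by
      simp only [ht, Finset.mem_filter] at hT
      have hsub : s.bipartiteBelow (fun S T : Finset V => S ⊆ T) T ⊆ T.powersetCard i := by
        intro S hS
        rw [Finset.mem_bipartiteBelow] at hS
        simp only [hs, Finset.mem_filter] at hS
        rw [Finset.mem_powersetCard]
        exact ⟨hS.2, hS.1.2.1⟩
      calc (s.bipartiteBelow (fun S T : Finset V => S ⊆ T) T).card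
          ≤ (T.powersetCard i).card := Finset.card_le_card hsub
        _ = (i + 1).choose i := by rw [Finset.card_powersetCard, hT.2.1]
        _ = i + 1 := Nat.choose_succ_self_right i)
  calc (Fintype.card V - i) * s.card = s.card * (Fintype.card V - i) := mul_comm _ _
    _ ≤ t.card * (i + 1) := h
    _ = (i + 1) * t.card := mul_comm _ _


/-- For a co-hereditary graph property `A` and a graph `G` of order `n`,
if for `k = ⌈n/2⌉` one has `c k / C(n,k) ≥ (n-k)/(k+1)`, then the sequence
`c 0, ..., c n` is unimodal with mode `⌈n/2⌉`. -/
theorem stmt_3 {V : Type} [Fintype V] (G : SimpleGraph V)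
    (A : ∀ ⦃α : Type⦄, SimpleGraph α → Prop)
    (hA : ∀ ⦃α β : Type⦄ (H : SimpleGraph α) (H' : SimpleGraph β),
      Nonempty (H ↪g H') → A H → A H')
    (c : ℕ → ℕ)
    (hc : ∀ k, c k = Nat.card {S : Finset V // S.card = k ∧ A (G.induce (S : Set V))})
    (hratio : ((Fintype.card V : ℝ) - ((Fintype.card V + 1) / 2 : ℕ)) /
        (((Fintype.card V + 1) / 2 : ℕ) + 1 : ℝ) ≤
      (c ((Fintype.card V + 1) / 2) : ℝ) /
        ((Fintype.card V).choose ((Fintype.card V + 1) / 2) : ℝ)) :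
    (∀ i < (Fintype.card V + 1) / 2, c i ≤ c (i + 1)) ∧
    (∀ i, (Fintype.card V + 1) / 2 ≤ i → i < Fintype.card V → c (i + 1) ≤ c i) := by
  classical
  set n := Fintype.card V with hn
  set k := (n + 1) / 2 with hk
  set P : Finset V → Prop := fun S => A (G.induce (S : Set V)) with hP
  -- P is monotone under ⊆
  have hPmono : ∀ ⦃S T : Finset V⦄, S ⊆ T → P S → P T := by
    intro S T hST hS
    have hsub : (S : Set V) ⊆ (T : Set V) := by exact_mod_cast hST
    have emb : G.induce (S : Set V) ↪g G.induce (T : Set V) :=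
      ⟨⟨Set.inclusion hsub, Set.inclusion_injective hsub⟩, Iff.rfl⟩
    exact hA (G.induce (S : Set V)) (G.induce (T : Set V)) ⟨emb⟩ hS
  -- c as a filter card
  have hc' : ∀ i, c i = (Finset.univ.filter fun S : Finset V => S.card = i ∧ P S).card := by
    intro i
    rw [hc, Nat.card_eq_fintype_card, Fintype.card_subtype]
  -- key local inequality
  have hkey : ∀ i, (n - i) * c i ≤ (i + 1) * c (i + 1) := by
    intro i
    rw [hc' i, hc' (i + 1)]
    exact key_keylemma P hPmono i
  -- c i ≤ choose n i
  have hcle : ∀ i, c i ≤ n.choose i := by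
    intro i
    rw [hc' i]
    calc (Finset.univ.filter fun S : Finset V => S.card = i ∧ P S).card
        ≤ ((Finset.univ : Finset V).powersetCard i).card := by
          apply Finset.card_le_card
          intro S hS
          rw [Finset.mem_filter] at hS
          rw [Finset.mem_powersetCard]
          exact ⟨Finset.subset_univ _, hS.2.1⟩
      _ = n.choose i := by rw [Finset.card_powersetCard, Finset.card_univ]
  -- cross-multiplied density monotonicity
  have hdens : ∀ i, i + 1 ≤ n → n.choose (i + 1) * c i ≤ n.choose i * c (i + 1) := by
    intro i hi
    have h1 : (i + 1) * (n.choose (i + 1) * c i) ≤ (i + 1) * (n.choose i * c (i + 1)) := by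
      calc (i + 1) * (n.choose (i + 1) * c i) = n.choose (i + 1) * (i + 1) * c i := by ring
        _ = n.choose i * (n - i) * c i := by rw [Nat.choose_succ_right_eq]
        _ = n.choose i * ((n - i) * c i) := by ring
        _ ≤ n.choose i * ((i + 1) * c (i + 1)) := Nat.mul_le_mul_left _ (hkey i)
        _ = (i + 1) * (n.choose i * c (i + 1)) := by ring
    exact Nat.le_of_mul_le_mul_left h1 (Nat.succ_pos i)
  -- chain: for k ≤ i ≤ n, choose n i * c k ≤ choose n k * c i
  have hchain : ∀ i, k ≤ i → i ≤ n → n.choose i * c k ≤ n.choose k * c i := by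
    intro i
    induction i with
    | zero =>
      intro h1 _
      have h0 : k = 0 := Nat.le_zero.mp h1
      rw [h0]
    | succ j ih =>
      intro h1 h2
      rcases Nat.lt_or_ge k (j + 1) with hlt | hge
      · have hkj : k ≤ j := by omega
        have hjn : j ≤ n := by omega
        have ihj := ih hkj hjn
        have hd := hdens j h2
        have hjpos : 0 < n.choose j := Nat.choose_pos hjn
        have h3 : n.choose j * (n.choose (j + 1) * c k) ≤ n.choose j * (n.choose k * c (j + 1)) := by
          calc n.choose j * (n.choose (j + 1) * c k) = n.choose (j + 1) * (n.choose j * c k) := by ring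
            _ ≤ n.choose (j + 1) * (n.choose k * c j) := Nat.mul_le_mul_left _ ihj
            _ = n.choose k * (n.choose (j + 1) * c j) := by ring
            _ ≤ n.choose k * (n.choose j * c (j + 1)) := Nat.mul_le_mul_left _ hd
            _ = n.choose j * (n.choose k * c (j + 1)) := by ring
        exact Nat.le_of_mul_le_mul_left h3 hjpos
      · have : k = j + 1 := by omega
        rw [this]
  constructor
  · -- increasing part
    intro i hi
    have h1 : i + 1 ≤ n - i := by omega
    have h2 : (i + 1) * c i ≤ (i + 1) * c (i + 1) :=
      le_trans (Nat.mul_le_mul_right _ h1) (hkey i)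
    exact Nat.le_of_mul_le_mul_left h2 (Nat.succ_pos i)
  · -- decreasing part
    intro i hki hin
    have hkn : k ≤ n := le_trans hki (le_of_lt hin)
    have hinle : i ≤ n := le_of_lt hin
    -- convert hratio to ℕ
    have hckpos : 0 < n.choose k := Nat.choose_pos hkn
    have hratio' : (n - k) * n.choose k ≤ (k + 1) * c k := by
      have hr : ((n : ℝ) - k) / ((k : ℝ) + 1) ≤ (c k : ℝ) / (n.choose k : ℝ) := hratio
      have h1 : ((n : ℝ) - k) * (n.choose k : ℝ) ≤ (c k : ℝ) * ((k : ℝ) + 1) := by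
        rw [div_le_div_iff₀ (by positivity) (by exact_mod_cast hckpos)] at hr
        exact hr
      have h2 : ((n - k : ℕ) : ℝ) * ((n.choose k : ℕ) : ℝ) ≤ ((k + 1 : ℕ) : ℝ) * ((c k : ℕ) : ℝ) := by
        push_cast [Nat.cast_sub hkn]
        linarith
      exact_mod_cast h2
    -- chain gives: choose n i * c k ≤ choose n k * c i
    have hch := hchain i hki hinle
    -- derive (n - k) * choose n i ≤ (k+1) * c i
    have h3 : n.choose k * ((n - k) * n.choose i) ≤ n.choose k * ((k + 1) * c i) := by
      calc n.choose k * ((n - k) * n.choose i) = (n - k) * n.choose k * n.choose i := by ring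
        _ ≤ (k + 1) * c k * n.choose i := Nat.mul_le_mul_right _ hratio'
        _ = (k + 1) * (n.choose i * c k) := by ring
        _ ≤ (k + 1) * (n.choose k * c i) := Nat.mul_le_mul_left _ hch
        _ = n.choose k * ((k + 1) * c i) := by ring
    have h4 : (n - k) * n.choose i ≤ (k + 1) * c i := Nat.le_of_mul_le_mul_left h3 hckpos
    -- (n - i)(k + 1) ≤ (n - k)(i + 1)
    have h5 : (n - i) * (k + 1) ≤ (n - k) * (i + 1) := by
      have hki' : k ≤ i := hki
      zify [hkn, hinle]
      nlinarith [mul_nonneg (sub_nonneg.2 (show (k : ℤ) ≤ i by exact_mod_cast hki'))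
        (show (0 : ℤ) ≤ (n : ℤ) + 1 by positivity)]
    -- (n - i) * choose n i ≤ (i + 1) * c i
    have h6 : (k + 1) * ((n - i) * n.choose i) ≤ (k + 1) * ((i + 1) * c i) := by
      calc (k + 1) * ((n - i) * n.choose i) = (n - i) * (k + 1) * n.choose i := by ring
        _ ≤ (n - k) * (i + 1) * n.choose i := Nat.mul_le_mul_right _ h5
        _ = (i + 1) * ((n - k) * n.choose i) := by ring
        _ ≤ (i + 1) * ((k + 1) * c i) := Nat.mul_le_mul_left _ h4
        _ = (k + 1) * ((i + 1) * c i) := by ring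
    have h7 : (n - i) * n.choose i ≤ (i + 1) * c i := Nat.le_of_mul_le_mul_left h6 (Nat.succ_pos k)
    have h8 : (i + 1) * n.choose (i + 1) ≤ (i + 1) * c i := by
      calc (i + 1) * n.choose (i + 1) = n.choose (i + 1) * (i + 1) := mul_comm _ _
        _ = n.choose i * (n - i) := Nat.choose_succ_right_eq n i
        _ = (n - i) * n.choose i := mul_comm _ _
        _ ≤ (i + 1) * c i := h7
    have h9 : n.choose (i + 1) ≤ c i := Nat.le_of_mul_le_mul_left h8 (Nat.succ_pos i)
    exact le_trans (hcle (i + 1)) h9
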